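/- Let 𝔉(x,z) = Σ_{i,j≥0} A_{i,j} x^i z^j be a commutative formal group over H, and define ω̃(x) = (id ⊗ ε̃)(∂𝔉(x,z)/∂z) = (id ⊗ ε)A_{0,1} + Σ_{i≥1} ((id ⊗ ε)A_{i,1}) x^i ∈ H[[x]], where ε̃ : H[[z]] → R applies ε to coefficients and sends z to 0. Then the identity (Δω̃)(𝔉(x⊗1,1⊗x)) = (∂𝔉(x⊗1,1⊗x)/∂(1⊗x)) · (1⊗ω̃)(1⊗x) holds in (H ⊗_R H)[[x⊗1, 1⊗x]], where Δω̃ denotes ω̃ with Δ applied to all its coefficients (so that (Δω̃)(𝔉) is the composition of power series, well defined since 𝔉 has zero constant term), ∂/∂(1⊗x) is the formal partial derivative with respect to the variable 1⊗x, and (1⊗ω̃)(1⊗x) denotes ω̃ with coefficients b replaced by 1⊗b evaluated in the variable 1⊗x. -/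

import Mathlib

open scoped TensorProduct

noncomputable section

namespace FGHopf

variable {A B : Type*} [CommRing A] [CommRing B] {σ : Type*}

/-- Apply a map to all coefficients of a (multivariate) power series. -/
def mapCoeffs (f : A → B) (F : MvPowerSeries σ A) : MvPowerSeries σ B :=
  fun m => f (F m)

/-- Substitution of two power series `G`, `K` into a two-variable power series `w`
(the mathematically correct substitution whenever the relevant family of coefficients
is finitely supported, e.g. when `G` and `K` have zero constant term or `w` is a
polynomial). -/
def subst2 (w : MvPowerSeries (Fin 2) A) (G K : MvPowerSeries σ A) :
    MvPowerSeries σ A :=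
  fun m => ∑ᶠ p : ℕ × ℕ,
    MvPowerSeries.coeff (R := A) (Finsupp.single 0 p.1 + Finsupp.single 1 p.2) w *
      MvPowerSeries.coeff (R := A) m (G ^ p.1 * K ^ p.2)

/-- Substitution of a power series `G` into a one-variable power series `w`. -/
def subst1 (w : PowerSeries A) (G : MvPowerSeries σ A) : MvPowerSeries σ A :=
  fun m => ∑ᶠ n : ℕ, PowerSeries.coeff (R := A) n w * MvPowerSeries.coeff (R := A) m (G ^ n)

/-- Regard a two-variable series as a three-variable series in the first two variables,
mapping its coefficients by `f`. -/
def emb12 (f : A → B) (F : MvPowerSeries (Fin 2) A) : MvPowerSeries (Fin 3) B :=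
  fun m => if m 2 = 0 then
    f (F (Finsupp.single 0 (m 0) + Finsupp.single 1 (m 1))) else 0

/-- Regard a two-variable series as a three-variable series in the last two variables,
mapping its coefficients by `f`. -/
def emb23 (f : A → B) (F : MvPowerSeries (Fin 2) A) : MvPowerSeries (Fin 3) B :=
  fun m => if m 0 = 0 then
    f (F (Finsupp.single 0 (m 1) + Finsupp.single 1 (m 2))) else 0

/-- Regard a one-variable series as a two-variable series in the first variable `x⊗1`,
mapping its coefficients by `f`. -/
def inVar0 (f : A → B) (g : PowerSeries A) : MvPowerSeries (Fin 2) B :=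
  fun m => if m 1 = 0 then f (PowerSeries.coeff (R := A) (m 0) g) else 0

/-- Regard a one-variable series as a two-variable series in the second variable `1⊗x`,
mapping its coefficients by `f`. -/
def inVar1 (f : A → B) (g : PowerSeries A) : MvPowerSeries (Fin 2) B :=
  fun m => if m 0 = 0 then f (PowerSeries.coeff (R := A) (m 1) g) else 0

/-- Formal partial derivative of a multivariate power series with respect to the `i`-th
variable. -/
def pderiv (i : σ) (F : MvPowerSeries σ A) : MvPowerSeries σ A :=
  fun m => ((m i + 1 : ℕ) : A) * F (m + Finsupp.single i 1)

variable (R : Type*) [CommRing R] (H : Type*) [CommRing H] [HopfAlgebra R H]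

/-- `id ⊗ ε : H ⊗ H → H`. -/
def idCounit : H ⊗[R] H →ₗ[R] H :=
  (TensorProduct.rid R H).toLinearMap ∘ₗ
    LinearMap.lTensor H (Coalgebra.counit (R := R) (A := H))

/-- `ε ⊗ id : H ⊗ H → H`. -/
def counitId : H ⊗[R] H →ₗ[R] H :=
  (TensorProduct.lid R H).toLinearMap ∘ₗ
    LinearMap.rTensor H (Coalgebra.counit (R := R) (A := H))

/-- `Δ ⊗ id : H ⊗ H → H ⊗ H ⊗ H` (with the rightmost association). -/
def comulLeftTensor : H ⊗[R] H →ₗ[R] H ⊗[R] (H ⊗[R] H) :=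
  (TensorProduct.assoc R H H H).toLinearMap ∘ₗ
    LinearMap.rTensor H (Coalgebra.comul (R := R) (A := H))

/-- `id ⊗ Δ : H ⊗ H → H ⊗ H ⊗ H`. -/
def idTensorComul : H ⊗[R] H →ₗ[R] H ⊗[R] (H ⊗[R] H) :=
  LinearMap.lTensor H (Coalgebra.comul (R := R) (A := H))

/-- `a ↦ a ⊗ 1 : H ⊗ H → H ⊗ H ⊗ H`. -/
def incl12 : H ⊗[R] H →ₗ[R] H ⊗[R] (H ⊗[R] H) :=
  LinearMap.lTensor H ((TensorProduct.mk R H H).flip 1)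

/-- `a ↦ 1 ⊗ a : H ⊗ H → H ⊗ H ⊗ H`. -/
def incl23 : H ⊗[R] H →ₗ[R] H ⊗[R] (H ⊗[R] H) :=
  TensorProduct.mk R H (H ⊗[R] H) 1

/-- The flip `τ` of the two tensor factors of `H ⊗ H`. -/
def tau : H ⊗[R] H →ₗ[R] H ⊗[R] H := (TensorProduct.comm R H H).toLinearMap

/-- The unit axiom for a formal group `F` over the Hopf algebra `H`: applying `id ⊗ ε`
to all coefficients and setting the second variable to `0` yields the series `x`, and
symmetrically. -/
def UnitAxiom (F : MvPowerSeries (Fin 2) (H ⊗[R] H)) : Prop :=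
  (∀ n : ℕ, idCounit R H (F (Finsupp.single 0 n)) = if n = 1 then 1 else 0) ∧
  (∀ n : ℕ, counitId R H (F (Finsupp.single 1 n)) = if n = 1 then 1 else 0)

/-- The associativity axiom for a formal group `F` over the Hopf algebra `H`:
`((Δ ⊗ id)F)(F(x⊗1,1⊗x) ⊗ 1, 1⊗1⊗x) = ((id ⊗ Δ)F)(x⊗1⊗1, 1 ⊗ F(x⊗1,1⊗x))`. -/
def AssocAxiom (F : MvPowerSeries (Fin 2) (H ⊗[R] H)) : Prop :=
  subst2 (mapCoeffs (comulLeftTensor R H) F) (emb12 (incl12 R H) F)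
      (MvPowerSeries.X 2) =
  subst2 (mapCoeffs (idTensorComul R H) F) (MvPowerSeries.X 0)
      (emb23 (incl23 R H) F)

/-- The commutativity axiom: `F` is symmetric, `A_{i,j} = τ(A_{j,i})`. -/
def CommAxiom (F : MvPowerSeries (Fin 2) (H ⊗[R] H)) : Prop :=
  ∀ m : Fin 2 →₀ ℕ,
    F m = tau R H (F (Finsupp.single 0 (m 1) + Finsupp.single 1 (m 0)))

/-- A commutative formal group over the Hopf algebra `H`: a two-variable power series
with coefficients in `H ⊗ H`, with zero constant term, satisfying the unit,
associativity and commutativity axioms. -/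
def IsCommFormalGroup (F : MvPowerSeries (Fin 2) (H ⊗[R] H)) : Prop :=
  F 0 = 0 ∧ UnitAxiom R H F ∧ AssocAxiom R H F ∧ CommAxiom R H F


section Aux
variable {A B : Type*} [CommRing A] [CommRing B] {σ : Type*}

lemma fin2_eq (m : Fin 2 →₀ ℕ) :
    m = Finsupp.single 0 (m 0) + Finsupp.single 1 (m 1) := by
  ext i
  fin_cases i <;> simp [Finsupp.single_apply]

lemma fin3_eq (m : Fin 3 →₀ ℕ) :
    m = Finsupp.single 0 (m 0) + Finsupp.single 1 (m 1) + Finsupp.single 2 (m 2) := by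
  ext i
  fin_cases i <;> simp [Finsupp.single_apply]

lemma s2_apply0 (i j : ℕ) :
    (Finsupp.single 0 i + Finsupp.single 1 j : Fin 2 →₀ ℕ) 0 = i := by
  simp [Finsupp.single_apply]

lemma s2_apply1 (i j : ℕ) :
    (Finsupp.single 0 i + Finsupp.single 1 j : Fin 2 →₀ ℕ) 1 = j := by
  simp [Finsupp.single_apply]

lemma s3_apply0 (i j k : ℕ) :
    (Finsupp.single 0 i + Finsupp.single 1 j + Finsupp.single 2 k : Fin 3 →₀ ℕ) 0 = i := by
  simp [Finsupp.single_apply]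

lemma s3_apply1 (i j k : ℕ) :
    (Finsupp.single 0 i + Finsupp.single 1 j + Finsupp.single 2 k : Fin 3 →₀ ℕ) 1 = j := by
  simp [Finsupp.single_apply]

lemma s3_apply2 (i j k : ℕ) :
    (Finsupp.single 0 i + Finsupp.single 1 j + Finsupp.single 2 k : Fin 3 →₀ ℕ) 2 = k := by
  simp [Finsupp.single_apply]

lemma antidiag2 (m : Fin 2 →₀ ℕ) (f : (Fin 2 →₀ ℕ) → (Fin 2 →₀ ℕ) → A) :
    ∑ p ∈ Finset.HasAntidiagonal.antidiagonal m, f p.1 p.2 =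
    ∑ i ∈ Finset.HasAntidiagonal.antidiagonal (m 0), ∑ j ∈ Finset.HasAntidiagonal.antidiagonal (m 1),
      f (Finsupp.single 0 i.1 + Finsupp.single 1 j.1)
        (Finsupp.single 0 i.2 + Finsupp.single 1 j.2) := by
  rw [← Finset.sum_product']
  refine Finset.sum_nbij' (fun p => ((p.1 0, p.2 0), (p.1 1, p.2 1)))
    (fun q => (Finsupp.single 0 q.1.1 + Finsupp.single 1 q.2.1,
               Finsupp.single 0 q.1.2 + Finsupp.single 1 q.2.2)) ?_ ?_ ?_ ?_ ?_
  · intro p hp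
    rw [Finset.HasAntidiagonal.mem_antidiagonal] at hp
    simp only [Finset.mem_product, Finset.HasAntidiagonal.mem_antidiagonal]
    constructor
    · rw [← Finsupp.add_apply, hp]
    · rw [← Finsupp.add_apply, hp]
  · intro q hq
    simp only [Finset.mem_product, Finset.HasAntidiagonal.mem_antidiagonal] at hq
    rw [Finset.HasAntidiagonal.mem_antidiagonal]
    ext i
    fin_cases i <;>
      simp [Finsupp.single_apply, hq.1, hq.2]
  · intro p hp
    exact Prod.ext (fin2_eq p.1).symm (fin2_eq p.2).symm
  · intro q hq
    obtain ⟨⟨q11, q12⟩, ⟨q21, q22⟩⟩ := q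
    simp [s2_apply0, s2_apply1]
  · intro p hp
    exact congrArg₂ f (fin2_eq p.1) (fin2_eq p.2)

lemma antidiag3 (m : Fin 3 →₀ ℕ) (f : (Fin 3 →₀ ℕ) → (Fin 3 →₀ ℕ) → A) :
    ∑ p ∈ Finset.HasAntidiagonal.antidiagonal m, f p.1 p.2 =
    ∑ i ∈ Finset.HasAntidiagonal.antidiagonal (m 0), ∑ j ∈ Finset.HasAntidiagonal.antidiagonal (m 1),
      ∑ k ∈ Finset.HasAntidiagonal.antidiagonal (m 2),
      f (Finsupp.single 0 i.1 + Finsupp.single 1 j.1 + Finsupp.single 2 k.1)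
        (Finsupp.single 0 i.2 + Finsupp.single 1 j.2 + Finsupp.single 2 k.2) := by
  have h2 : ∑ i ∈ Finset.HasAntidiagonal.antidiagonal (m 0), ∑ j ∈ Finset.HasAntidiagonal.antidiagonal (m 1),
      ∑ k ∈ Finset.HasAntidiagonal.antidiagonal (m 2),
      f (Finsupp.single 0 i.1 + Finsupp.single 1 j.1 + Finsupp.single 2 k.1)
        (Finsupp.single 0 i.2 + Finsupp.single 1 j.2 + Finsupp.single 2 k.2)
      = ∑ q ∈ (Finset.HasAntidiagonal.antidiagonal (m 0) ×ˢ Finset.HasAntidiagonal.antidiagonal (m 1)) ×ˢ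
          Finset.HasAntidiagonal.antidiagonal (m 2),
      f (Finsupp.single 0 q.1.1.1 + Finsupp.single 1 q.1.2.1 + Finsupp.single 2 q.2.1)
        (Finsupp.single 0 q.1.1.2 + Finsupp.single 1 q.1.2.2 + Finsupp.single 2 q.2.2) := by
    rw [Finset.sum_product, Finset.sum_product]
  rw [h2]
  refine Finset.sum_nbij' (fun p => (((p.1 0, p.2 0), (p.1 1, p.2 1)), (p.1 2, p.2 2)))
    (fun q => (Finsupp.single 0 q.1.1.1 + Finsupp.single 1 q.1.2.1 + Finsupp.single 2 q.2.1,
               Finsupp.single 0 q.1.1.2 + Finsupp.single 1 q.1.2.2 + Finsupp.single 2 q.2.2))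
    ?_ ?_ ?_ ?_ ?_
  · intro p hp
    rw [Finset.HasAntidiagonal.mem_antidiagonal] at hp
    simp only [Finset.mem_product, Finset.HasAntidiagonal.mem_antidiagonal]
    refine ⟨⟨?_, ?_⟩, ?_⟩ <;> rw [← Finsupp.add_apply, hp]
  · intro q hq
    simp only [Finset.mem_product, Finset.HasAntidiagonal.mem_antidiagonal] at hq
    rw [Finset.HasAntidiagonal.mem_antidiagonal]
    ext i
    fin_cases i <;>
      simp [Finsupp.single_apply, hq.1.1, hq.1.2, hq.2]
  · intro p hp
    exact Prod.ext (fin3_eq p.1).symm (fin3_eq p.2).symm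
  · intro q hq
    obtain ⟨⟨⟨q1, q2⟩, ⟨q3, q4⟩⟩, ⟨q5, q6⟩⟩ := q
    simp [s3_apply0, s3_apply1, s3_apply2]
  · intro p hp
    exact congrArg₂ f (fin3_eq p.1) (fin3_eq p.2)


-- mapCoeffs-like: pointwise application of a ring hom equals MvPowerSeries.map
lemma mapc_eq (f : A →+* B) (F : MvPowerSeries σ A) :
    (fun m => f (F m)) = MvPowerSeries.map f F := rfl

-- vanishing of low-degree coefficients of powers
lemma coeff_pow_eq_zero {F : MvPowerSeries (Fin 2) A} (hF : F 0 = 0) :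
    ∀ (p : ℕ) (m : Fin 2 →₀ ℕ), m 0 + m 1 < p → (F ^ p) m = 0 := by
  intro p
  induction p with
  | zero => intro m hm; omega
  | succ p ih =>
    intro m hm
    have h1 : (F ^ (p + 1)) m = MvPowerSeries.coeff (R := A) m (F ^ p * F) := by
      rw [pow_succ]; rfl
    rw [h1, MvPowerSeries.coeff_mul,
      antidiag2 m (fun c d => (MvPowerSeries.coeff (R := A) c) (F ^ p) * (MvPowerSeries.coeff (R := A) d) F)]
    refine Finset.sum_eq_zero fun i hi => Finset.sum_eq_zero fun j hj => ?_
    rw [Finset.HasAntidiagonal.mem_antidiagonal] at hi hj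
    rcases lt_or_ge (i.1 + j.1) p with h | h
    · have h2 := ih (Finsupp.single 0 i.1 + Finsupp.single 1 j.1)
        (by rw [s2_apply0, s2_apply1]; omega)
      rw [MvPowerSeries.coeff_apply, MvPowerSeries.coeff_apply, h2, zero_mul]
    · have hi2 : i.2 = 0 := by omega
      have hj2 : j.2 = 0 := by omega
      rw [MvPowerSeries.coeff_apply, MvPowerSeries.coeff_apply, hi2, hj2]
      simp only [Finsupp.single_zero, add_zero]
      rw [hF, mul_zero]


lemma fin2_zero_iff (m : Fin 2 →₀ ℕ) : m = 0 ↔ m 0 = 0 ∧ m 1 = 0 := by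
  constructor
  · rintro rfl; simp
  · rintro ⟨h0, h1⟩; ext i; fin_cases i <;> simp [h0, h1]

lemma fin3_zero_iff (m : Fin 3 →₀ ℕ) : m = 0 ↔ m 0 = 0 ∧ m 1 = 0 ∧ m 2 = 0 := by
  constructor
  · rintro rfl; simp
  · rintro ⟨h0, h1, h2⟩; ext i; fin_cases i <;> simp [h0, h1, h2]

lemma emb12_apply (f : A → B) (F : MvPowerSeries (Fin 2) A) (m : Fin 3 →₀ ℕ) :
    emb12 f F m = if m 2 = 0 then
      f (F (Finsupp.single 0 (m 0) + Finsupp.single 1 (m 1))) else 0 := rfl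

lemma emb23_apply (f : A → B) (F : MvPowerSeries (Fin 2) A) (m : Fin 3 →₀ ℕ) :
    emb23 f F m = if m 0 = 0 then
      f (F (Finsupp.single 0 (m 1) + Finsupp.single 1 (m 2))) else 0 := rfl

lemma emb12_one (f : A →+* B) : emb12 (⇑f) (1 : MvPowerSeries (Fin 2) A) = 1 := by
  classical
  funext m
  rw [show (1 : MvPowerSeries (Fin 3) B) m = if m = 0 then 1 else 0 from
    MvPowerSeries.coeff_one _, emb12_apply]
  rw [show ((1 : MvPowerSeries (Fin 2) A) (Finsupp.single 0 (m 0) + Finsupp.single 1 (m 1)))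
      = if (Finsupp.single 0 (m 0) + Finsupp.single 1 (m 1) : Fin 2 →₀ ℕ) = 0 then 1 else 0 from
    MvPowerSeries.coeff_one _]
  by_cases h2 : m 2 = 0 <;>
  by_cases h0 : m 0 = 0 <;>
  by_cases h1 : m 1 = 0 <;>
    simp [h0, h1, h2, fin2_zero_iff, fin3_zero_iff, s2_apply0, s2_apply1]

lemma emb12_mul (f : A →+* B) (F G : MvPowerSeries (Fin 2) A) :
    emb12 (⇑f) (F * G) = emb12 (⇑f) F * emb12 (⇑f) G := by
  classical
  funext m
  rw [show (emb12 (⇑f) F * emb12 (⇑f) G) m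
      = MvPowerSeries.coeff (R := B) m (emb12 (⇑f) F * emb12 (⇑f) G) from rfl,
    MvPowerSeries.coeff_mul,
    antidiag3 m (fun c d => MvPowerSeries.coeff (R := B) c (emb12 (⇑f) F) *
      MvPowerSeries.coeff (R := B) d (emb12 (⇑f) G))]
  by_cases hm : m 2 = 0
  · rw [emb12_apply, if_pos hm,
      show ((F * G) (Finsupp.single 0 (m 0) + Finsupp.single 1 (m 1)))
        = MvPowerSeries.coeff (R := A) _ (F * G) from rfl,
      MvPowerSeries.coeff_mul,
      antidiag2 (Finsupp.single 0 (m 0) + Finsupp.single 1 (m 1))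
        (fun c d => MvPowerSeries.coeff (R := A) c F * MvPowerSeries.coeff (R := A) d G),
      s2_apply0, s2_apply1, hm, Finset.Nat.antidiagonal_zero, map_sum]
    refine Finset.sum_congr rfl fun i hi => ?_
    rw [map_sum]
    refine Finset.sum_congr rfl fun j hj => ?_
    simp [MvPowerSeries.coeff_apply, emb12_apply, s3_apply0, s3_apply1, s3_apply2]
  · rw [emb12_apply, if_neg hm]
    refine (Finset.sum_eq_zero fun i hi => Finset.sum_eq_zero fun j hj =>
      Finset.sum_eq_zero fun k hk => ?_).symm
    rw [Finset.HasAntidiagonal.mem_antidiagonal] at hk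
    simp only [MvPowerSeries.coeff_apply, emb12_apply, s3_apply2]
    by_cases hk1 : k.1 = 0
    · have h2 : ¬ k.2 = 0 := by omega
      simp [h2]
    · simp [hk1]

lemma emb12_pow (f : A →+* B) (F : MvPowerSeries (Fin 2) A) (p : ℕ) :
    (emb12 (⇑f) F) ^ p = emb12 (⇑f) (F ^ p) := by
  induction p with
  | zero => rw [pow_zero, pow_zero, emb12_one]
  | succ p ih => rw [pow_succ, pow_succ, ih, emb12_mul]

lemma emb23_one (f : A →+* B) : emb23 (⇑f) (1 : MvPowerSeries (Fin 2) A) = 1 := by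
  classical
  funext m
  rw [show (1 : MvPowerSeries (Fin 3) B) m = if m = 0 then 1 else 0 from
    MvPowerSeries.coeff_one _, emb23_apply]
  rw [show ((1 : MvPowerSeries (Fin 2) A) (Finsupp.single 0 (m 1) + Finsupp.single 1 (m 2)))
      = if (Finsupp.single 0 (m 1) + Finsupp.single 1 (m 2) : Fin 2 →₀ ℕ) = 0 then 1 else 0 from
    MvPowerSeries.coeff_one _]
  by_cases h2 : m 2 = 0 <;>
  by_cases h0 : m 0 = 0 <;>
  by_cases h1 : m 1 = 0 <;>
    simp [h0, h1, h2, fin2_zero_iff, fin3_zero_iff, s2_apply0, s2_apply1]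

lemma emb23_mul (f : A →+* B) (F G : MvPowerSeries (Fin 2) A) :
    emb23 (⇑f) (F * G) = emb23 (⇑f) F * emb23 (⇑f) G := by
  classical
  funext m
  rw [show (emb23 (⇑f) F * emb23 (⇑f) G) m
      = MvPowerSeries.coeff (R := B) m (emb23 (⇑f) F * emb23 (⇑f) G) from rfl,
    MvPowerSeries.coeff_mul,
    antidiag3 m (fun c d => MvPowerSeries.coeff (R := B) c (emb23 (⇑f) F) *
      MvPowerSeries.coeff (R := B) d (emb23 (⇑f) G))]
  by_cases hm : m 0 = 0
  · rw [emb23_apply, if_pos hm,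
      show ((F * G) (Finsupp.single 0 (m 1) + Finsupp.single 1 (m 2)))
        = MvPowerSeries.coeff (R := A) _ (F * G) from rfl,
      MvPowerSeries.coeff_mul,
      antidiag2 (Finsupp.single 0 (m 1) + Finsupp.single 1 (m 2))
        (fun c d => MvPowerSeries.coeff (R := A) c F * MvPowerSeries.coeff (R := A) d G),
      s2_apply0, s2_apply1, hm, Finset.Nat.antidiagonal_zero, Finset.sum_singleton]
    rw [map_sum]
    refine Finset.sum_congr rfl fun i hi => ?_
    rw [map_sum]
    refine Finset.sum_congr rfl fun j hj => ?_
    simp [MvPowerSeries.coeff_apply, emb23_apply, s3_apply0, s3_apply1, s3_apply2]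
  · rw [emb23_apply, if_neg hm]
    refine (Finset.sum_eq_zero fun i hi => Finset.sum_eq_zero fun j hj =>
      Finset.sum_eq_zero fun k hk => ?_).symm
    rw [Finset.HasAntidiagonal.mem_antidiagonal] at hi
    simp only [MvPowerSeries.coeff_apply, emb23_apply, s3_apply0]
    by_cases hi1 : i.1 = 0
    · have h2 : ¬ i.2 = 0 := by omega
      simp [h2]
    · simp [hi1]

lemma emb23_pow (f : A →+* B) (F : MvPowerSeries (Fin 2) A) (p : ℕ) :
    (emb23 (⇑f) F) ^ p = emb23 (⇑f) (F ^ p) := by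
  induction p with
  | zero => rw [pow_zero, pow_zero, emb23_one]
  | succ p ih => rw [pow_succ, pow_succ, ih, emb23_mul]

lemma coeff_mul_single0 (φ ψ : MvPowerSeries (Fin 2) A) (b : ℕ) :
    (φ * ψ) (Finsupp.single 0 b) =
    ∑ ij ∈ Finset.HasAntidiagonal.antidiagonal b,
      φ (Finsupp.single 0 ij.1) * ψ (Finsupp.single 0 ij.2) := by
  classical
  rw [show (φ * ψ) (Finsupp.single 0 b) = MvPowerSeries.coeff (R := A) _ (φ * ψ) from rfl,
    MvPowerSeries.coeff_mul,
    antidiag2 (Finsupp.single 0 b)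
      (fun c d => MvPowerSeries.coeff (R := A) c φ * MvPowerSeries.coeff (R := A) d ψ),
    Finsupp.single_eq_same,
    show (Finsupp.single (0 : Fin 2) b) 1 = 0 from Finsupp.single_eq_of_ne (by decide),
    Finset.Nat.antidiagonal_zero]
  simp [MvPowerSeries.coeff_apply]

lemma coeff_mul_single1 (φ ψ : MvPowerSeries (Fin 2) A) (b : ℕ) :
    (φ * ψ) (Finsupp.single 0 b + Finsupp.single 1 1) =
    ∑ ij ∈ Finset.HasAntidiagonal.antidiagonal b,
      (φ (Finsupp.single 0 ij.1 + Finsupp.single 1 1) * ψ (Finsupp.single 0 ij.2)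
       + φ (Finsupp.single 0 ij.1) * ψ (Finsupp.single 0 ij.2 + Finsupp.single 1 1)) := by
  classical
  rw [show (φ * ψ) (Finsupp.single 0 b + Finsupp.single 1 1)
      = MvPowerSeries.coeff (R := A) _ (φ * ψ) from rfl,
    MvPowerSeries.coeff_mul,
    antidiag2 (Finsupp.single 0 b + Finsupp.single 1 1)
      (fun c d => MvPowerSeries.coeff (R := A) c φ * MvPowerSeries.coeff (R := A) d ψ),
    s2_apply0, s2_apply1,
    show (Finset.HasAntidiagonal.antidiagonal 1 : Finset (ℕ × ℕ)) = {(0,1),(1,0)} from by decide]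
  refine Finset.sum_congr rfl fun i hi => ?_
  rw [Finset.sum_pair (by decide)]
  simp only [MvPowerSeries.coeff_apply, Finsupp.single_zero, add_zero]
  ring

lemma pow_coeff_single0 (f : MvPowerSeries (Fin 2) A)
    (h0 : ∀ d, f (Finsupp.single 0 d) = if d = 1 then 1 else 0) :
    ∀ q b, (f ^ q) (Finsupp.single 0 b) = if b = q then 1 else 0 := by
  classical
  intro q
  induction q with
  | zero =>
    intro b
    rw [pow_zero, show ((1 : MvPowerSeries (Fin 2) A) (Finsupp.single 0 b))
        = if (Finsupp.single (0 : Fin 2) b : Fin 2 →₀ ℕ) = 0 then 1 else 0 from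
      MvPowerSeries.coeff_one _]
    simp [Finsupp.single_eq_zero]
  | succ q ih =>
    intro b
    rw [pow_succ, coeff_mul_single0]
    have step : ∀ ij ∈ Finset.HasAntidiagonal.antidiagonal b,
        (f ^ q) (Finsupp.single 0 ij.1) * f (Finsupp.single 0 ij.2)
        = if ij = (q, 1) then 1 else 0 := by
      rintro ⟨x, y⟩ hxy
      rw [ih, h0]
      by_cases hx : x = q <;> by_cases hy : y = 1 <;> simp [hx, hy, Prod.ext_iff]
    rw [Finset.sum_congr rfl step, Finset.sum_ite_eq' (Finset.HasAntidiagonal.antidiagonal b) (q, 1)]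
    by_cases h : b = q + 1
    · rw [if_pos (by rw [Finset.HasAntidiagonal.mem_antidiagonal]; omega), if_pos h]
    · rw [if_neg (by rw [Finset.HasAntidiagonal.mem_antidiagonal]; omega), if_neg h]

lemma pow_coeff_single1 (f : MvPowerSeries (Fin 2) A)
    (h0 : ∀ d, f (Finsupp.single 0 d) = if d = 1 then 1 else 0)
    (w : ℕ → A) (hw : ∀ n, f (Finsupp.single 0 n + Finsupp.single 1 1) = w n) :
    ∀ (q b : ℕ), (f ^ q) (Finsupp.single 0 b + Finsupp.single 1 1) =
      if q ≤ b + 1 then (q : A) * w (b + 1 - q) else 0 := by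
  classical
  intro q
  induction q with
  | zero =>
    intro b
    have hne : (Finsupp.single 0 b + Finsupp.single 1 1 : Fin 2 →₀ ℕ) ≠ 0 := by
      intro h
      have h1 : (Finsupp.single 0 b + Finsupp.single 1 1 : Fin 2 →₀ ℕ) 1 = 0 := by rw [h]; rfl
      rw [s2_apply1] at h1
      exact one_ne_zero h1
    rw [pow_zero, show ((1 : MvPowerSeries (Fin 2) A)
        (Finsupp.single 0 b + Finsupp.single 1 1))
        = if (Finsupp.single 0 b + Finsupp.single 1 1 : Fin 2 →₀ ℕ) = 0 then 1 else 0 from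
      MvPowerSeries.coeff_one _, if_neg hne]
    simp
  | succ q ih =>
    intro b
    rw [pow_succ, coeff_mul_single1]
    have step : ∀ ij ∈ Finset.HasAntidiagonal.antidiagonal b,
        ((f ^ q) (Finsupp.single 0 ij.1 + Finsupp.single 1 1) * f (Finsupp.single 0 ij.2)
         + (f ^ q) (Finsupp.single 0 ij.1) * f (Finsupp.single 0 ij.2 + Finsupp.single 1 1))
        = (if ij = (b - 1, 1) then (if q ≤ b then (q : A) * w (b - q) else 0) else 0)
          + (if ij = (q, b - q) then w (b - q) else 0) := by
      rintro ⟨x, y⟩ hxy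
      rw [Finset.HasAntidiagonal.mem_antidiagonal] at hxy
      rw [ih, h0, pow_coeff_single0 f h0, hw]
      congr 1
      · by_cases hy : y = 1
        · subst hy
          have hx : x = b - 1 := by omega
          subst hx
          have hb1 : b - 1 + 1 = b := by omega
          have hb2 : b - 1 + 1 - q = b - q := by omega
          simp [hb1, hb2]
        · simp [hy, Prod.ext_iff]
      · by_cases hx : x = q
        · have hy : y = b - q := by omega
          simp [hx, hy, Prod.ext_iff]
        · simp [hx, Prod.ext_iff]
    rw [Finset.sum_congr rfl step, Finset.sum_add_distrib,
      Finset.sum_ite_eq' (Finset.HasAntidiagonal.antidiagonal b) (b - 1, 1),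
      Finset.sum_ite_eq' (Finset.HasAntidiagonal.antidiagonal b) (q, b - q)]
    by_cases hq : q ≤ b
    · have m2 : (q, b - q) ∈ Finset.HasAntidiagonal.antidiagonal b := by rw [Finset.HasAntidiagonal.mem_antidiagonal]; omega
      rw [if_pos m2]
      by_cases hb : 1 ≤ b
      · have m1 : (b - 1, 1) ∈ Finset.HasAntidiagonal.antidiagonal b := by
          rw [Finset.HasAntidiagonal.mem_antidiagonal]; omega
        rw [if_pos m1, if_pos hq, if_pos (show q + 1 ≤ b + 1 by omega)]
        have e1 : b + 1 - (q + 1) = b - q := by omega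
        rw [e1]
        push_cast
        ring
      · have hb0 : b = 0 := by omega
        have hq0 : q = 0 := by omega
        subst hb0; subst hq0
        rw [if_neg (show (0 - 1, 1) ∉ Finset.HasAntidiagonal.antidiagonal 0 by
          rw [Finset.HasAntidiagonal.mem_antidiagonal]; omega)]
        norm_num
    · have m2 : (q, b - q) ∉ Finset.HasAntidiagonal.antidiagonal b := by rw [Finset.HasAntidiagonal.mem_antidiagonal]; omega
      rw [if_neg m2, if_neg (show ¬ (q + 1 ≤ b + 1) by omega), add_zero]
      by_cases hb : 1 ≤ b
      · have m1 : (b - 1, 1) ∈ Finset.HasAntidiagonal.antidiagonal b := by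
          rw [Finset.HasAntidiagonal.mem_antidiagonal]; omega
        rw [if_pos m1, if_neg hq]
      · have m1 : (b - 1, 1) ∉ Finset.HasAntidiagonal.antidiagonal b := by
          rw [Finset.HasAntidiagonal.mem_antidiagonal]; omega
        rw [if_neg m1]

lemma s2_addsingle (i j : ℕ) :
    (Finsupp.single 0 i + Finsupp.single 1 j : Fin 2 →₀ ℕ) + Finsupp.single 1 1
      = Finsupp.single 0 i + Finsupp.single 1 (j + 1) := by
  ext k; fin_cases k <;> simp [Finsupp.single_apply]

lemma pderiv_apply (i : σ) (F : MvPowerSeries σ A) (m : σ →₀ ℕ) :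
    pderiv i F m = ((m i + 1 : ℕ) : A) * F (m + Finsupp.single i 1) := rfl

lemma inVar1_apply (f : A → B) (g : PowerSeries A) (m : Fin 2 →₀ ℕ) :
    inVar1 f g m = if m 0 = 0 then f (PowerSeries.coeff (R := A) (m 1) g) else 0 := rfl

end Aux

section HopfAux

variable (R : Type*) [CommRing R] (H : Type*) [CommRing H] [HopfAlgebra R H]

/-- `id ⊗ ε` as an algebra hom. -/
def idCounitAlg : H ⊗[R] H →ₐ[R] H :=
  (Algebra.TensorProduct.rid R R H).toAlgHom.comp
    (Algebra.TensorProduct.map (AlgHom.id R H) (Bialgebra.counitAlgHom R H))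

lemma idCounit_eq (x : H ⊗[R] H) : idCounit R H x = idCounitAlg R H x := by
  have h : idCounit R H = (idCounitAlg R H).toLinearMap := by
    apply TensorProduct.ext'
    intro a b
    simp [idCounit, idCounitAlg]
  rw [h]; rfl

/-- `id ⊗ (id ⊗ ε)` as an algebra hom. -/
def phiAlg : H ⊗[R] (H ⊗[R] H) →ₐ[R] H ⊗[R] H :=
  Algebra.TensorProduct.map (AlgHom.id R H) (idCounitAlg R H)

/-- `incl12` as an algebra hom. -/
def incl12Alg : H ⊗[R] H →ₐ[R] H ⊗[R] (H ⊗[R] H) :=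
  Algebra.TensorProduct.map (AlgHom.id R H)
    (Algebra.TensorProduct.includeLeft (S := R))

lemma incl12_eq (x : H ⊗[R] H) : incl12 R H x = incl12Alg R H x := by
  have h : incl12 R H = (incl12Alg R H).toLinearMap := by
    apply TensorProduct.ext'
    intro a b
    simp [incl12, incl12Alg]
  rw [h]; rfl

/-- `incl23` as an algebra hom. -/
def incl23Alg : H ⊗[R] H →ₐ[R] H ⊗[R] (H ⊗[R] H) :=
  Algebra.TensorProduct.includeRight

lemma incl23_eq (x : H ⊗[R] H) : incl23 R H x = incl23Alg R H x := rfl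

lemma idCounit_comul (b : H) :
    idCounit R H (Coalgebra.comul (R := R) b) = b := by
  simp [idCounit, Coalgebra.lTensor_counit_comul]

lemma phi_comulLeftTensor (x : H ⊗[R] H) :
    phiAlg R H (comulLeftTensor R H x)
      = Coalgebra.comul (R := R) (idCounit R H x) := by
  have key : ∀ (c : H ⊗[R] H) (b : H),
      phiAlg R H ((TensorProduct.assoc R H H H) (c ⊗ₜ[R] b))
      = Coalgebra.counit (R := R) (A := H) b • c := by
    intro c b
    induction c using TensorProduct.induction_on with
    | zero => rw [TensorProduct.zero_tmul, LinearEquiv.map_zero, map_zero, smul_zero]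
    | tmul u v =>
      rw [TensorProduct.assoc_tmul]
      have h1 : idCounitAlg R H (v ⊗ₜ[R] b) = Coalgebra.counit (R := R) (A := H) b • v := by
        rw [← idCounit_eq]
        simp [idCounit]
      rw [show phiAlg R H (u ⊗ₜ[R] (v ⊗ₜ[R] b)) = u ⊗ₜ[R] idCounitAlg R H (v ⊗ₜ[R] b) from
        Algebra.TensorProduct.map_tmul _ _ _ _, h1, TensorProduct.tmul_smul]
    | add u v hu hv => rw [TensorProduct.add_tmul, map_add, map_add, hu, hv, smul_add]
  induction x using TensorProduct.induction_on with
  | zero => simp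
  | tmul a b =>
    have h1 : comulLeftTensor R H (a ⊗ₜ[R] b)
        = (TensorProduct.assoc R H H H) ((Coalgebra.comul (R := R) a) ⊗ₜ[R] b) := by
      simp [comulLeftTensor]
    have h2 : idCounit R H (a ⊗ₜ[R] b) = Coalgebra.counit (R := R) (A := H) b • a := by
      simp [idCounit]
    rw [h1, key, h2, map_smul]
  | add u v hu hv => rw [map_add, map_add, hu, hv, map_add, map_add]

lemma phi_idTensorComul (x : H ⊗[R] H) :
    phiAlg R H (idTensorComul R H x) = x := by
  have h : (phiAlg R H).toLinearMap ∘ₗ idTensorComul R H = LinearMap.id := by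
    apply TensorProduct.ext'
    intro a b
    have h1 : idCounitAlg R H (Coalgebra.comul (R := R) b) = b := by
      rw [← idCounit_eq, idCounit_comul]
    simp [phiAlg, idTensorComul, h1]
  exact congrArg (fun g => g x) (congrArg (fun (g : _ →ₗ[R] _) => ⇑g) h)

lemma phi_incl12 (x : H ⊗[R] H) : phiAlg R H (incl12 R H x) = x := by
  have h : (phiAlg R H).toLinearMap ∘ₗ incl12 R H = LinearMap.id := by
    apply TensorProduct.ext'
    intro a b
    have h1 : idCounitAlg R H (b ⊗ₜ[R] (1 : H)) = b := by
      rw [← idCounit_eq]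
      simp [idCounit]
    simp [phiAlg, incl12, h1]
  exact congrArg (fun g => g x) (congrArg (fun (g : _ →ₗ[R] _) => ⇑g) h)

lemma phi_incl23 (x : H ⊗[R] H) :
    phiAlg R H (incl23 R H x) = (1 : H) ⊗ₜ[R] (idCounit R H x) := by
  rw [idCounit_eq]
  exact Algebra.TensorProduct.map_tmul _ _ _ _

lemma tmul_nat_mul (q : ℕ) (x : H) (Aq : H ⊗[R] H) :
    Aq * ((1 : H) ⊗ₜ[R] ((q : H) * x)) = (q : H ⊗[R] H) * Aq * ((1 : H) ⊗ₜ[R] x) := by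
  have h1 : ((q : H) * x) = (q : ℕ) • x := by simp
  rw [h1, TensorProduct.tmul_smul, mul_smul_comm, nsmul_eq_mul, ← mul_assoc]

end HopfAux

set_option maxHeartbeats 1000000 in
/-- for a commutative formal group `𝔉` over `H` and
`ω̃(x) = (id⊗ε̃)(∂𝔉/∂z)`, one has
`(Δω̃)(𝔉(x⊗1,1⊗x)) = ∂𝔉/∂(1⊗x) · (1⊗ω̃)(1⊗x)`. -/
theorem stmt4
    (R : Type*) [CommRing R] [NoZeroSMulDivisors ℤ R]
    (H : Type*) [CommRing H] [HopfAlgebra R H]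
    (F : MvPowerSeries (Fin 2) (H ⊗[R] H)) (hF : IsCommFormalGroup R H F)
    (ω : PowerSeries H)
    (hω : ω = PowerSeries.mk fun n =>
      idCounit R H (F (Finsupp.single 0 n + Finsupp.single 1 1))) :
    subst1 (mapCoeffs (⇑(Coalgebra.comul (R := R) (A := H))) ω) F =
      pderiv 1 F * inVar1 (fun b => (1 : H) ⊗ₜ[R] b) ω := by
  classical
  obtain ⟨h0F, ⟨hU1, _⟩, hAssoc, _⟩ := hF
  funext m
  -- coefficient function of ω
  set wc : ℕ → H := fun n => PowerSeries.coeff (R := H) n ω with hwcdef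
  have hwc : ∀ n, idCounit R H (F (Finsupp.single 0 n + Finsupp.single 1 1)) = wc n := by
    intro n
    rw [hwcdef]
    simp only [hω, PowerSeries.coeff_mk]
  -- the series f = (id ⊗ ε) applied to coefficients of F
  set ic : H ⊗[R] H →+* H := (idCounitAlg R H).toRingHom with hicdef
  set f : MvPowerSeries (Fin 2) H := fun m' => ic (F m') with hfdef
  have hicpow : ∀ (q : ℕ) (idx : Fin 2 →₀ ℕ), ic ((F ^ q) idx) = (f ^ q) idx := by
    intro q idx
    have h1 : ic ((F ^ q) idx)
        = MvPowerSeries.coeff (R := H) idx (MvPowerSeries.map ic (F ^ q)) := by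
      rw [MvPowerSeries.coeff_map]; rfl
    rw [h1, map_pow]; rfl
  have hf0 : ∀ d, f (Finsupp.single 0 d) = if d = 1 then 1 else 0 := by
    intro d
    have h1 := hU1 d
    rw [idCounit_eq] at h1
    exact h1
  have hfw : ∀ n, f (Finsupp.single 0 n + Finsupp.single 1 1) = wc n := by
    intro n
    have h1 := hwc n
    rw [idCounit_eq] at h1
    exact h1
  have hV : ∀ q : ℕ, (f ^ q) (Finsupp.single 0 (m 1) + Finsupp.single 1 1)
      = if q ≤ m 1 + 1 then (q : H) * wc (m 1 + 1 - q) else 0 :=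
    fun q => pow_coeff_single1 f hf0 wc hfw q (m 1)
  -- the three-variable index
  set m3 : Fin 3 →₀ ℕ :=
    Finsupp.single 0 (m 0) + Finsupp.single 1 (m 1) + Finsupp.single 2 1 with hm3
  have e0 : m3 0 = m 0 := by rw [hm3]; exact s3_apply0 _ _ _
  have e1 : m3 1 = m 1 := by rw [hm3]; exact s3_apply1 _ _ _
  have e2 : m3 2 = 1 := by rw [hm3]; exact s3_apply2 _ _ _
  -- coefficients of products with X-powers on the left-hand side of associativity
  have hL : ∀ p q : ℕ,
      MvPowerSeries.coeff (R := (H ⊗[R] (H ⊗[R] H))) m3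
        ((emb12 (⇑(incl12 R H)) F) ^ p * (MvPowerSeries.X 2) ^ q)
      = if q = 1 then incl12 R H ((F ^ p) m) else 0 := by
    intro p q
    have hco : ⇑(incl12 R H) = ⇑(incl12Alg R H).toRingHom := funext (incl12_eq R H)
    have hpow : (emb12 (⇑(incl12 R H)) F) ^ p = emb12 (⇑(incl12 R H)) (F ^ p) := by
      rw [hco, emb12_pow]
    rw [hpow, MvPowerSeries.X_pow_eq, MvPowerSeries.coeff_mul_monomial]
    by_cases hq1 : q = 1
    · subst hq1
      have hle : Finsupp.single (2 : Fin 3) 1 ≤ m3 := by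
        rw [Finsupp.single_le_iff, e2]
      rw [if_pos hle, if_pos rfl, mul_one]
      have hidx : m3 - Finsupp.single 2 1
          = Finsupp.single 0 (m 0) + Finsupp.single 1 (m 1) + Finsupp.single 2 0 := by
        rw [hm3]; ext i; fin_cases i <;> simp [Finsupp.tsub_apply, Finsupp.single_apply]
      rw [hidx, MvPowerSeries.coeff_apply, emb12_apply, s3_apply2, if_pos rfl,
        s3_apply0, s3_apply1, ← fin2_eq]
    · rw [if_neg hq1]
      rcases Nat.lt_or_ge q 2 with h2 | h2
      · have hq0 : q = 0 := by omega
        subst hq0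
        have hle : Finsupp.single (2 : Fin 3) 0 ≤ m3 := by
          rw [Finsupp.single_le_iff]; omega
        have hidx0 : m3 - Finsupp.single 2 0 = m3 := by
          rw [Finsupp.single_zero, tsub_zero]
        rw [if_pos hle, hidx0, mul_one, MvPowerSeries.coeff_apply, emb12_apply, e2]
        simp
      · rw [if_neg]
        rw [Finsupp.single_le_iff, e2]
        omega
  -- coefficients on the right-hand side of associativity
  have hR : ∀ p q : ℕ,
      MvPowerSeries.coeff (R := (H ⊗[R] (H ⊗[R] H))) m3
        ((MvPowerSeries.X 0) ^ p * (emb23 (⇑(incl23 R H)) F) ^ q)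
      = if p = m 0 then
          incl23 R H ((F ^ q) (Finsupp.single 0 (m 1) + Finsupp.single 1 1)) else 0 := by
    intro p q
    have hco : ⇑(incl23 R H) = ⇑(incl23Alg R H).toRingHom := funext (incl23_eq R H)
    have hpow : (emb23 (⇑(incl23 R H)) F) ^ q = emb23 (⇑(incl23 R H)) (F ^ q) := by
      rw [hco, emb23_pow]
    rw [hpow, MvPowerSeries.X_pow_eq, MvPowerSeries.coeff_monomial_mul]
    by_cases hple : p ≤ m 0
    · have hle : Finsupp.single (0 : Fin 3) p ≤ m3 := by
        rw [Finsupp.single_le_iff, e0]; exact hple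
      rw [if_pos hle, one_mul]
      have hidx : m3 - Finsupp.single 0 p
          = Finsupp.single 0 (m 0 - p) + Finsupp.single 1 (m 1) + Finsupp.single 2 1 := by
        rw [hm3]; ext i; fin_cases i <;> simp [Finsupp.tsub_apply, Finsupp.single_apply]
      rw [hidx, MvPowerSeries.coeff_apply, emb23_apply, s3_apply0, s3_apply1, s3_apply2]
      by_cases hpa : p = m 0
      · rw [if_pos (by omega), if_pos hpa]
      · rw [if_neg (by omega), if_neg hpa]
    · rw [if_neg (by rw [Finsupp.single_le_iff, e0]; exact hple), if_neg (by omega)]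
  -- value of the left-hand side of associativity at m3
  have hLval : subst2 (mapCoeffs (⇑(comulLeftTensor R H)) F) (emb12 (⇑(incl12 R H)) F)
      (MvPowerSeries.X 2) m3
      = ∑ p ∈ Finset.range (m 0 + m 1 + 1),
          comulLeftTensor R H (F (Finsupp.single 0 p + Finsupp.single 1 1))
            * incl12 R H ((F ^ p) m) := by
    have h1 : subst2 (mapCoeffs (⇑(comulLeftTensor R H)) F) (emb12 (⇑(incl12 R H)) F)
        (MvPowerSeries.X 2) m3
        = ∑ᶠ pq : ℕ × ℕ, (if pq.2 = 1 then
            comulLeftTensor R H (F (Finsupp.single 0 pq.1 + Finsupp.single 1 1))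
              * incl12 R H ((F ^ pq.1) m) else 0) := by
      refine finsum_congr fun pq => ?_
      rw [show MvPowerSeries.coeff (R := H ⊗[R] (H ⊗[R] H))
          (Finsupp.single 0 pq.1 + Finsupp.single 1 pq.2)
          (mapCoeffs (⇑(comulLeftTensor R H)) F)
          = comulLeftTensor R H (F (Finsupp.single 0 pq.1 + Finsupp.single 1 pq.2)) from rfl,
        hL pq.1 pq.2]
      by_cases h : pq.2 = 1
      · rw [if_pos h, if_pos h, h]
      · rw [if_neg h, if_neg h, mul_zero]
    rw [h1, finsum_eq_finset_sum_of_support_subset _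
      (s := Finset.range (m 0 + m 1 + 1) ×ˢ ({1} : Finset ℕ)) ?_]
    · rw [Finset.sum_product]
      refine Finset.sum_congr rfl fun p hp => ?_
      rw [Finset.sum_singleton, if_pos rfl]
    · intro pq hpq
      simp only [Function.mem_support] at hpq
      simp only [Finset.coe_product, Set.mem_prod, Finset.mem_coe, Finset.mem_range,
        Finset.mem_singleton, Finset.coe_singleton, Set.mem_singleton_iff]
      by_cases h2 : pq.2 = 1
      · refine ⟨?_, h2⟩
        by_contra h1p
        apply hpq
        rw [if_pos h2, coeff_pow_eq_zero h0F pq.1 m (by omega), LinearMap.map_zero, mul_zero]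
      · exact absurd (if_neg h2) (by intro hc; exact hpq hc)
  -- value of the right-hand side of associativity at m3
  have hRval : subst2 (mapCoeffs (⇑(idTensorComul R H)) F) (MvPowerSeries.X 0)
      (emb23 (⇑(incl23 R H)) F) m3
      = ∑ q ∈ Finset.range (m 1 + 2),
          idTensorComul R H (F (Finsupp.single 0 (m 0) + Finsupp.single 1 q))
            * incl23 R H ((F ^ q) (Finsupp.single 0 (m 1) + Finsupp.single 1 1)) := by
    have h1 : subst2 (mapCoeffs (⇑(idTensorComul R H)) F) (MvPowerSeries.X 0)
        (emb23 (⇑(incl23 R H)) F) m3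
        = ∑ᶠ pq : ℕ × ℕ, (if pq.1 = m 0 then
            idTensorComul R H (F (Finsupp.single 0 (m 0) + Finsupp.single 1 pq.2))
              * incl23 R H ((F ^ pq.2) (Finsupp.single 0 (m 1) + Finsupp.single 1 1))
            else 0) := by
      refine finsum_congr fun pq => ?_
      rw [show MvPowerSeries.coeff (R := H ⊗[R] (H ⊗[R] H))
          (Finsupp.single 0 pq.1 + Finsupp.single 1 pq.2)
          (mapCoeffs (⇑(idTensorComul R H)) F)
          = idTensorComul R H (F (Finsupp.single 0 pq.1 + Finsupp.single 1 pq.2)) from rfl,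
        hR pq.1 pq.2]
      by_cases h : pq.1 = m 0
      · rw [if_pos h, if_pos h, h]
      · rw [if_neg h, if_neg h, mul_zero]
    rw [h1, finsum_eq_finset_sum_of_support_subset _
      (s := ({m 0} : Finset ℕ) ×ˢ Finset.range (m 1 + 2)) ?_]
    · rw [Finset.sum_product, Finset.sum_singleton]
      refine Finset.sum_congr rfl fun q hq => ?_
      rw [if_pos rfl]
    · intro pq hpq
      simp only [Function.mem_support] at hpq
      simp only [Finset.coe_product, Set.mem_prod, Finset.mem_coe, Finset.mem_range,
        Finset.mem_singleton, Finset.coe_singleton, Set.mem_singleton_iff]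
      by_cases h1p : pq.1 = m 0
      · refine ⟨h1p, ?_⟩
        by_contra h2
        apply hpq
        rw [if_pos h1p, coeff_pow_eq_zero h0F pq.2
          (Finsupp.single 0 (m 1) + Finsupp.single 1 1)
          (by rw [s2_apply0, s2_apply1]; omega), LinearMap.map_zero, mul_zero]
      · exact absurd (if_neg h1p) (by intro hc; exact hpq hc)
  -- applying φ = id ⊗ (id ⊗ ε)
  have hphiL : phiAlg R H (∑ p ∈ Finset.range (m 0 + m 1 + 1),
      comulLeftTensor R H (F (Finsupp.single 0 p + Finsupp.single 1 1))
        * incl12 R H ((F ^ p) m))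
      = ∑ p ∈ Finset.range (m 0 + m 1 + 1),
          Coalgebra.comul (R := R) (wc p) * (F ^ p) m := by
    rw [map_sum]
    refine Finset.sum_congr rfl fun p hp => ?_
    rw [map_mul, phi_comulLeftTensor, phi_incl12, hwc]
  have hphiR : phiAlg R H (∑ q ∈ Finset.range (m 1 + 2),
      idTensorComul R H (F (Finsupp.single 0 (m 0) + Finsupp.single 1 q))
        * incl23 R H ((F ^ q) (Finsupp.single 0 (m 1) + Finsupp.single 1 1)))
      = ∑ q ∈ Finset.range (m 1 + 2),
          F (Finsupp.single 0 (m 0) + Finsupp.single 1 q)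
            * ((1 : H) ⊗ₜ[R] (if q ≤ m 1 + 1 then (q : H) * wc (m 1 + 1 - q) else 0)) := by
    rw [map_sum]
    refine Finset.sum_congr rfl fun q hq => ?_
    rw [map_mul, phi_idTensorComul, phi_incl23]
    congr 1
    rw [idCounit_eq]
    rw [show idCounitAlg R H ((F ^ q) (Finsupp.single 0 (m 1) + Finsupp.single 1 1))
        = ic ((F ^ q) (Finsupp.single 0 (m 1) + Finsupp.single 1 1)) from rfl,
      hicpow, hV]
  -- the goal, left-hand side
  have hgoalL : subst1 (mapCoeffs (⇑(Coalgebra.comul (R := R) (A := H))) ω) F m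
      = ∑ p ∈ Finset.range (m 0 + m 1 + 1),
          Coalgebra.comul (R := R) (wc p) * (F ^ p) m := by
    have h0 : subst1 (mapCoeffs (⇑(Coalgebra.comul (R := R) (A := H))) ω) F m
        = ∑ᶠ n : ℕ, Coalgebra.comul (R := R) (wc n) * (F ^ n) m := rfl
    rw [h0, finsum_eq_finset_sum_of_support_subset _
      (s := Finset.range (m 0 + m 1 + 1)) ?_]
    intro n hn
    simp only [Function.mem_support] at hn
    simp only [Finset.mem_coe, Finset.mem_range]
    by_contra h1n
    exact hn (by rw [coeff_pow_eq_zero h0F n m (by omega), mul_zero])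
  -- the goal, right-hand side
  have hgoalR : (pderiv 1 F * inVar1 (fun b => (1 : H) ⊗ₜ[R] b) ω) m
      = ∑ j ∈ Finset.HasAntidiagonal.antidiagonal (m 1), ((j.1 + 1 : ℕ) : H ⊗[R] H)
          * F (Finsupp.single 0 (m 0) + Finsupp.single 1 (j.1 + 1))
          * ((1 : H) ⊗ₜ[R] wc j.2) := by
    rw [show (pderiv 1 F * inVar1 (fun b => (1 : H) ⊗ₜ[R] b) ω) m
        = MvPowerSeries.coeff (R := (H ⊗[R] H)) m
            (pderiv 1 F * inVar1 (fun b => (1 : H) ⊗ₜ[R] b) ω) from rfl,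
      MvPowerSeries.coeff_mul,
      antidiag2 m (fun c d => MvPowerSeries.coeff (R := (H ⊗[R] H)) c (pderiv 1 F)
        * MvPowerSeries.coeff (R := (H ⊗[R] H)) d (inVar1 (fun b => (1 : H) ⊗ₜ[R] b) ω))]
    have hterm : ∀ i ∈ Finset.HasAntidiagonal.antidiagonal (m 0),
        (∑ j ∈ Finset.HasAntidiagonal.antidiagonal (m 1),
          MvPowerSeries.coeff (R := (H ⊗[R] H)) (Finsupp.single 0 i.1 + Finsupp.single 1 j.1)
            (pderiv 1 F)
          * MvPowerSeries.coeff (R := (H ⊗[R] H)) (Finsupp.single 0 i.2 + Finsupp.single 1 j.2)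
            (inVar1 (fun b => (1 : H) ⊗ₜ[R] b) ω))
        = if i = (m 0, 0) then
            (∑ j ∈ Finset.HasAntidiagonal.antidiagonal (m 1), ((j.1 + 1 : ℕ) : H ⊗[R] H)
              * F (Finsupp.single 0 (m 0) + Finsupp.single 1 (j.1 + 1))
              * ((1 : H) ⊗ₜ[R] wc j.2)) else 0 := by
      intro i hi
      rw [Finset.HasAntidiagonal.mem_antidiagonal] at hi
      by_cases hi2 : i.2 = 0
      · have hi1 : i.1 = m 0 := by omega
        rw [if_pos (Prod.ext hi1 hi2)]
        refine Finset.sum_congr rfl fun j hj => ?_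
        rw [MvPowerSeries.coeff_apply, MvPowerSeries.coeff_apply, pderiv_apply,
          inVar1_apply, s2_apply0, s2_apply1, s2_apply1, s2_addsingle, hi1,
          if_pos hi2]
      · rw [if_neg (by intro hc; rw [hc] at hi2; exact hi2 rfl)]
        refine Finset.sum_eq_zero fun j hj => ?_
        simp only [MvPowerSeries.coeff_apply]
        rw [inVar1_apply, s2_apply0, if_neg hi2, mul_zero]
    rw [Finset.sum_congr rfl hterm]
    rw [Finset.sum_ite_eq' (Finset.HasAntidiagonal.antidiagonal (m 0)) ((m 0, 0) : ℕ × ℕ)]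
    rw [if_pos (by rw [Finset.HasAntidiagonal.mem_antidiagonal]; simp)]
  -- the final comparison of the two finite sums
  have hfinal : ∑ q ∈ Finset.range (m 1 + 2),
      F (Finsupp.single 0 (m 0) + Finsupp.single 1 q)
        * ((1 : H) ⊗ₜ[R] (if q ≤ m 1 + 1 then (q : H) * wc (m 1 + 1 - q) else 0))
      = ∑ j ∈ Finset.HasAntidiagonal.antidiagonal (m 1), ((j.1 + 1 : ℕ) : H ⊗[R] H)
          * F (Finsupp.single 0 (m 0) + Finsupp.single 1 (j.1 + 1))
          * ((1 : H) ⊗ₜ[R] wc j.2) := by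
    rw [Finset.Nat.sum_antidiagonal_eq_sum_range_succ_mk,
      show m 1 + 2 = m 1 + 1 + 1 by omega, Finset.sum_range_succ']
    have hzero : F (Finsupp.single 0 (m 0) + Finsupp.single 1 0)
        * ((1 : H) ⊗ₜ[R] (if 0 ≤ m 1 + 1 then ((0 : ℕ) : H) * wc (m 1 + 1 - 0) else 0))
        = 0 := by
      rw [if_pos (by omega), Nat.cast_zero, zero_mul, TensorProduct.tmul_zero, mul_zero]
    rw [hzero, add_zero]
    refine Finset.sum_congr rfl fun q hq => ?_
    rw [Finset.mem_range] at hq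
    rw [if_pos (by omega), tmul_nat_mul, show m 1 + 1 - (q + 1) = m 1 - q from by omega]
  -- assemble
  have hkey := congrArg (phiAlg R H) (congrFun hAssoc m3)
  rw [hLval, hRval, hphiL, hphiR] at hkey
  rw [hgoalL, hgoalR, hkey, hfinal]

end FGHopf
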